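/- For λ > 0 and r > 0, let F(λ, r) = (e^{iλr} − e^{−λr}) / (8π λ² r), which is the kernel (at points with |x−y| = r) of the free fourth-order resolvent R⁺(λ⁴) = (Δ² − (λ⁴ + i0))^{−1} on ℝ³. Define the remainder E(λ, r) := F(λ, r) − (1+i)/(8πλ) + r/(8π) − (1−i) λ r² / (48π). Then there is a constant C such that whenever 0 < λ r < 1, for each j = 0, 1, 2, |∂_λ^j E(λ, r)| ≤ C λ^{2−j} r³. -/

import Mathlib

open Real Complex

noncomputable section

/-- The kernel of the free fourth-order resolvent at radius `r`:
`F(λ, r) = (e^{iλr} − e^{−λr}) / (8π λ² r)`. -/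
def resKer (l r : ℝ) : ℂ :=
  (Complex.exp (Complex.I * l * r) - Complex.exp (-(l : ℂ) * r)) / (8 * Real.pi * l ^ 2 * r)

/-- The remainder `E(λ, r)` after subtracting the first terms of the expansion. -/
def resRem (l r : ℝ) : ℂ :=
  resKer l r - (1 + Complex.I) / (8 * Real.pi * l) + (r : ℂ) / (8 * Real.pi) -
    (1 - Complex.I) * l * r ^ 2 / (48 * Real.pi)

def Nf (w : ℂ) : ℂ :=
  Complex.exp (Complex.I*w) - Complex.exp (-w) - (1+Complex.I)*w + w^2 - (1-Complex.I)*w^3/6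

def Nf1 (w : ℂ) : ℂ :=
  Complex.I*Complex.exp (Complex.I*w) + Complex.exp (-w) - (1+Complex.I) + 2*w - (1-Complex.I)*w^2/2

def Nf2 (w : ℂ) : ℂ :=
  -Complex.exp (Complex.I*w) - Complex.exp (-w) + 2 - (1-Complex.I)*w

lemma hasDerivAt_Nf (w : ℂ) : HasDerivAt Nf (Nf1 w) w := by
  have h1 : HasDerivAt (fun w : ℂ => Complex.exp (Complex.I*w)) (Complex.exp (Complex.I*w) * Complex.I) w := by
    simpa using ((hasDerivAt_id w).const_mul Complex.I).cexp
  have h2 : HasDerivAt (fun w : ℂ => Complex.exp (-w)) (Complex.exp (-w) * (-1)) w := by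
    simpa using ((hasDerivAt_id w).neg).cexp
  have h3 : HasDerivAt (fun w : ℂ => (1+Complex.I)*w) (1+Complex.I) w := by
    simpa using (hasDerivAt_id w).const_mul (1+Complex.I)
  have h4 : HasDerivAt (fun w : ℂ => w^2) (2*w) w := by
    simpa using hasDerivAt_pow 2 w
  have h5 : HasDerivAt (fun w : ℂ => (1-Complex.I)*w^3/6) ((1-Complex.I)*(3*w^2)/6) w := by
    simpa using (((hasDerivAt_pow 3 w).const_mul (1-Complex.I)).div_const 6)
  have H := ((((h1.sub h2).sub h3).add h4).sub h5)
  unfold Nf Nf1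
  refine H.congr_deriv (Eq.symm ?_)
  ring

lemma hasDerivAt_Nf1 (w : ℂ) : HasDerivAt Nf1 (Nf2 w) w := by
  have h1 : HasDerivAt (fun w : ℂ => Complex.I * Complex.exp (Complex.I*w))
      (Complex.I * (Complex.exp (Complex.I*w) * Complex.I)) w := by
    have : HasDerivAt (fun w : ℂ => Complex.exp (Complex.I*w)) (Complex.exp (Complex.I*w) * Complex.I) w := by
      simpa using ((hasDerivAt_id w).const_mul Complex.I).cexp
    simpa using this.const_mul Complex.I
  have h2 : HasDerivAt (fun w : ℂ => Complex.exp (-w)) (Complex.exp (-w) * (-1)) w := by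
    simpa using ((hasDerivAt_id w).neg).cexp
  have h3 : HasDerivAt (fun _ : ℂ => (1+Complex.I)) 0 w := hasDerivAt_const _ _
  have h4 : HasDerivAt (fun w : ℂ => 2*w) 2 w := by
    simpa using (hasDerivAt_id w).const_mul (2:ℂ)
  have h5 : HasDerivAt (fun w : ℂ => (1-Complex.I)*w^2/2) ((1-Complex.I)*(2*w)/2) w := by
    simpa using (((hasDerivAt_pow 2 w).const_mul (1-Complex.I)).div_const 2)
  have H := ((((h1.add h2).sub h3).add h4).sub h5)
  unfold Nf1 Nf2
  refine H.congr_deriv (Eq.symm ?_)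
  have : Complex.I * Complex.I = -1 := Complex.I_mul_I
  ring_nf
  rw [Complex.I_sq]
  ring

end
noncomputable section
lemma abs_Iw (w : ℝ) (h0 : 0 ≤ w) : ‖Complex.I * (w:ℂ)‖ = w := by
  simp [_root_.abs_of_nonneg h0]

lemma abs_negw (w : ℝ) (h0 : 0 ≤ w) : ‖-(w:ℂ)‖ = w := by
  simp [_root_.abs_of_nonneg h0]

lemma Nf_bound (w : ℝ) (h0 : 0 ≤ w) (h1 : w ≤ 1) : ‖Nf w‖ ≤ w^4 := by
  have e1 := Complex.exp_bound (x := Complex.I*(w:ℂ)) (by rw [abs_Iw w h0]; exact h1) (n := 4) (by norm_num)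
  have e2 := Complex.exp_bound (x := -(w:ℂ)) (by rw [abs_negw w h0]; exact h1) (n := 4) (by norm_num)
  rw [abs_Iw w h0] at e1
  rw [abs_negw w h0] at e2
  have key : Nf w = (Complex.exp (Complex.I*(w:ℂ)) - ∑ m ∈ Finset.range 4, (Complex.I*(w:ℂ))^m / m.factorial)
      - (Complex.exp (-(w:ℂ)) - ∑ m ∈ Finset.range 4, (-(w:ℂ))^m / m.factorial) := by
    have hI2 : (Complex.I:ℂ)^2 = -1 := Complex.I_sq
    have hI3 : (Complex.I:ℂ)^3 = -Complex.I := by rw [pow_succ, Complex.I_sq]; ring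
    simp [Nf, Finset.sum_range_succ, Nat.factorial]
    ring_nf
    rw [hI2, hI3]
    ring
  rw [key]
  refine le_trans (norm_sub_le _ _) ?_
  norm_num [Nat.factorial] at e1 e2
  nlinarith [pow_nonneg h0 4]
end
noncomputable section
lemma Nf1_bound (w : ℝ) (h0 : 0 ≤ w) (h1 : w ≤ 1) : ‖Nf1 w‖ ≤ w^3 := by
  have e1 := Complex.exp_bound (x := Complex.I*(w:ℂ)) (by rw [abs_Iw w h0]; exact h1) (n := 3) (by norm_num)
  have e2 := Complex.exp_bound (x := -(w:ℂ)) (by rw [abs_negw w h0]; exact h1) (n := 3) (by norm_num)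
  rw [abs_Iw w h0] at e1
  rw [abs_negw w h0] at e2
  have key : Nf1 w = Complex.I * (Complex.exp (Complex.I*(w:ℂ)) - ∑ m ∈ Finset.range 3, (Complex.I*(w:ℂ))^m / m.factorial)
      + (Complex.exp (-(w:ℂ)) - ∑ m ∈ Finset.range 3, (-(w:ℂ))^m / m.factorial) := by
    have hI2 : (Complex.I:ℂ)^2 = -1 := Complex.I_sq
    have hI3 : (Complex.I:ℂ)^3 = -Complex.I := by rw [pow_succ, Complex.I_sq]; ring
    simp [Nf1, Finset.sum_range_succ, Nat.factorial]
    ring_nf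
    rw [hI2, hI3]
    ring
  rw [key]
  refine le_trans (norm_add_le _ _) ?_
  rw [norm_mul, Complex.norm_I, one_mul]
  norm_num [Nat.factorial] at e1 e2
  nlinarith [pow_nonneg h0 3]

lemma Nf2_bound (w : ℝ) (h0 : 0 ≤ w) (h1 : w ≤ 1) : ‖Nf2 w‖ ≤ 2*w^2 := by
  have e1 := Complex.exp_bound (x := Complex.I*(w:ℂ)) (by rw [abs_Iw w h0]; exact h1) (n := 2) (by norm_num)
  have e2 := Complex.exp_bound (x := -(w:ℂ)) (by rw [abs_negw w h0]; exact h1) (n := 2) (by norm_num)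
  rw [abs_Iw w h0] at e1
  rw [abs_negw w h0] at e2
  have key : Nf2 w = -(Complex.exp (Complex.I*(w:ℂ)) - ∑ m ∈ Finset.range 2, (Complex.I*(w:ℂ))^m / m.factorial)
      - (Complex.exp (-(w:ℂ)) - ∑ m ∈ Finset.range 2, (-(w:ℂ))^m / m.factorial) := by
    simp [Nf2, Finset.sum_range_succ, Nat.factorial]
    ring
  rw [key]
  refine le_trans (norm_sub_le _ _) ?_
  rw [norm_neg]
  norm_num [Nat.factorial] at e1 e2
  nlinarith [pow_nonneg h0 2]
end
noncomputable section
open Filter Topology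

def D0 (r t : ℝ) : ℂ := Nf ((t:ℂ)*(r:ℂ)) / (8*(Real.pi:ℂ)*(t:ℂ)^2*(r:ℂ))

def D1 (r t : ℝ) : ℂ :=
  ((t:ℂ)*(r:ℂ)*Nf1 ((t:ℂ)*(r:ℂ)) - 2*Nf ((t:ℂ)*(r:ℂ))) / (8*(Real.pi:ℂ)*(t:ℂ)^3*(r:ℂ))

def D2 (r t : ℝ) : ℂ :=
  (((t:ℂ)*(r:ℂ))^2*Nf2 ((t:ℂ)*(r:ℂ)) - 4*((t:ℂ)*(r:ℂ))*Nf1 ((t:ℂ)*(r:ℂ)) + 6*Nf ((t:ℂ)*(r:ℂ)))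
    / (8*(Real.pi:ℂ)*(t:ℂ)^4*(r:ℂ))

lemma resRem_eq_D0 (r t : ℝ) (ht : t ≠ 0) (hr : r ≠ 0) : resRem t r = D0 r t := by
  have hπ : (Real.pi : ℂ) ≠ 0 := Complex.ofReal_ne_zero.2 Real.pi_ne_zero
  have ht' : (t : ℂ) ≠ 0 := Complex.ofReal_ne_zero.2 ht
  have hr' : (r : ℂ) ≠ 0 := Complex.ofReal_ne_zero.2 hr
  have hA : (8*(Real.pi:ℂ)*(t:ℂ)^2*(r:ℂ)) ≠ 0 := by
    refine mul_ne_zero (mul_ne_zero (mul_ne_zero (by norm_num) hπ) (pow_ne_zero _ ht')) hr'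
  have hB : (8*(Real.pi:ℂ)*(t:ℂ)) ≠ 0 := mul_ne_zero (mul_ne_zero (by norm_num) hπ) ht'
  have hC : (8*(Real.pi:ℂ)) ≠ 0 := mul_ne_zero (by norm_num) hπ
  have hD : (48*(Real.pi:ℂ)) ≠ 0 := mul_ne_zero (by norm_num) hπ
  unfold resRem resKer D0 Nf
  rw [div_sub_div _ _ hA hB, div_add_div _ _ (mul_ne_zero hA hB) hC,
    div_sub_div _ _ (mul_ne_zero (mul_ne_zero hA hB) hC) hD,
    div_eq_div_iff (mul_ne_zero (mul_ne_zero (mul_ne_zero hA hB) hC) hD) hA]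
  ring

lemma hasDerivAt_Nf_comp (r t : ℝ) :
    HasDerivAt (fun t : ℝ => Nf ((t:ℂ)*(r:ℂ))) ((r:ℂ) * Nf1 ((t:ℂ)*(r:ℂ))) t := by
  have h : HasDerivAt (fun z : ℂ => Nf (z*(r:ℂ))) (Nf1 ((t:ℂ)*(r:ℂ)) * (r:ℂ)) (t:ℂ) := by
    exact (hasDerivAt_Nf ((t:ℂ)*(r:ℂ))).comp (t:ℂ) (hasDerivAt_mul_const (r:ℂ))
  simpa [mul_comm] using h.comp_ofReal

lemma hasDerivAt_Nf1_comp (r t : ℝ) :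
    HasDerivAt (fun t : ℝ => Nf1 ((t:ℂ)*(r:ℂ))) ((r:ℂ) * Nf2 ((t:ℂ)*(r:ℂ))) t := by
  have h : HasDerivAt (fun z : ℂ => Nf1 (z*(r:ℂ))) (Nf2 ((t:ℂ)*(r:ℂ)) * (r:ℂ)) (t:ℂ) := by
    exact (hasDerivAt_Nf1 ((t:ℂ)*(r:ℂ))).comp (t:ℂ) (hasDerivAt_mul_const (r:ℂ))
  simpa [mul_comm] using h.comp_ofReal

lemma hasDerivAt_den (r t : ℝ) (n : ℕ) :
    HasDerivAt (fun t : ℝ => 8*(Real.pi:ℂ)*(t:ℂ)^n*(r:ℂ))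
      (8*(Real.pi:ℂ)*(n*(t:ℂ)^(n-1))*(r:ℂ)) t := by
  have h : HasDerivAt (fun z : ℂ => 8*(Real.pi:ℂ)*z^n*(r:ℂ))
      (8*(Real.pi:ℂ)*(n*(t:ℂ)^(n-1))*(r:ℂ)) (t:ℂ) := by
    have := ((hasDerivAt_pow n (t:ℂ)).const_mul (8*(Real.pi:ℂ))).mul_const (r:ℂ)
    convert this using 1
  exact h.comp_ofReal

lemma hasDerivAt_D0 (r t : ℝ) (ht : t ≠ 0) (hr : r ≠ 0) : HasDerivAt (D0 r) (D1 r t) t := by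
  have hπ : (Real.pi : ℂ) ≠ 0 := Complex.ofReal_ne_zero.2 Real.pi_ne_zero
  have ht' : (t : ℂ) ≠ 0 := Complex.ofReal_ne_zero.2 ht
  have hr' : (r : ℂ) ≠ 0 := Complex.ofReal_ne_zero.2 hr
  have hden : (8*(Real.pi:ℂ)*(t:ℂ)^2*(r:ℂ)) ≠ 0 := by
    refine mul_ne_zero (mul_ne_zero (mul_ne_zero (by norm_num) hπ) (pow_ne_zero _ ht')) hr'
  have hden3 : (8*(Real.pi:ℂ)*(t:ℂ)^3*(r:ℂ)) ≠ 0 := by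
    refine mul_ne_zero (mul_ne_zero (mul_ne_zero (by norm_num) hπ) (pow_ne_zero _ ht')) hr'
  have H := (hasDerivAt_Nf_comp r t).div (hasDerivAt_den r t 2) hden
  refine H.congr_deriv (Eq.symm ?_)
  unfold D1
  rw [div_eq_div_iff hden3 (pow_ne_zero 2 hden)]
  push_cast
  ring

lemma hasDerivAt_D1 (r t : ℝ) (ht : t ≠ 0) (hr : r ≠ 0) : HasDerivAt (D1 r) (D2 r t) t := by
  have hπ : (Real.pi : ℂ) ≠ 0 := Complex.ofReal_ne_zero.2 Real.pi_ne_zero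
  have ht' : (t : ℂ) ≠ 0 := Complex.ofReal_ne_zero.2 ht
  have hr' : (r : ℂ) ≠ 0 := Complex.ofReal_ne_zero.2 hr
  have hden : (8*(Real.pi:ℂ)*(t:ℂ)^3*(r:ℂ)) ≠ 0 := by
    refine mul_ne_zero (mul_ne_zero (mul_ne_zero (by norm_num) hπ) (pow_ne_zero _ ht')) hr'
  have h_tr : HasDerivAt (fun t : ℝ => (t:ℂ)*(r:ℂ)) ((r:ℂ)) t := by
    simpa using ((hasDerivAt_id (t:ℂ)).mul_const (r:ℂ)).comp_ofReal
  have hnum : HasDerivAt (fun t : ℝ => (t:ℂ)*(r:ℂ)*Nf1 ((t:ℂ)*(r:ℂ)) - 2*Nf ((t:ℂ)*(r:ℂ)))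
      ((r:ℂ)*Nf1 ((t:ℂ)*(r:ℂ)) + (t:ℂ)*(r:ℂ)*((r:ℂ)*Nf2 ((t:ℂ)*(r:ℂ)))
        - 2*((r:ℂ)*Nf1 ((t:ℂ)*(r:ℂ)))) t :=
    (h_tr.mul (hasDerivAt_Nf1_comp r t)).sub ((hasDerivAt_Nf_comp r t).const_mul 2)
  have hden4 : (8*(Real.pi:ℂ)*(t:ℂ)^4*(r:ℂ)) ≠ 0 := by
    refine mul_ne_zero (mul_ne_zero (mul_ne_zero (by norm_num) hπ) (pow_ne_zero _ ht')) hr'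
  have H := hnum.div (hasDerivAt_den r t 3) hden
  refine H.congr_deriv (Eq.symm ?_)
  unfold D2
  rw [div_eq_div_iff hden4 (pow_ne_zero 2 hden)]
  push_cast
  ring
end
noncomputable section
open Filter Topology

theorem stmt17 :
    ∃ C : ℝ, ∀ (l r : ℝ), 0 < l → 0 < r → l * r < 1 → ∀ j : ℕ, j ≤ 2 →
      ‖iteratedDeriv j (fun t : ℝ => resRem t r) l‖ ≤ C * l ^ (2 - j) * r ^ 3 := by
  refine ⟨1, ?_⟩
  intro l r hl hr hlr j hj
  have hrne : r ≠ 0 := hr.ne'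
  have hlne : l ≠ 0 := hl.ne'
  set w : ℝ := l * r with hwdef
  have hw0 : 0 ≤ w := le_of_lt (mul_pos hl hr)
  have hw1 : w ≤ 1 := le_of_lt hlr
  have hπ3 : (3:ℝ) < Real.pi := Real.pi_gt_three
  have hcast : (l:ℂ)*(r:ℂ) = ((w:ℝ):ℂ) := by rw [hwdef]; exact (Complex.ofReal_mul l r).symm
  have hb0 := Nf_bound w hw0 hw1
  have hb1 := Nf1_bound w hw0 hw1
  have hb2 := Nf2_bound w hw0 hw1
  have tne : ∀ᶠ t in 𝓝 l, t ≠ 0 :=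
    eventually_of_mem (isOpen_ne.mem_nhds hlne) (fun s hs => hs)
  have hev : (fun t : ℝ => resRem t r) =ᶠ[𝓝 l] D0 r := by
    filter_upwards [tne] with t ht
    exact resRem_eq_D0 r t ht hrne
  have hev1 : deriv (fun t : ℝ => resRem t r) =ᶠ[𝓝 l] D1 r := by
    filter_upwards [tne] with t ht
    have h1 : (fun t : ℝ => resRem t r) =ᶠ[𝓝 t] D0 r := by
      filter_upwards [eventually_of_mem (isOpen_ne.mem_nhds ht) (fun s hs => hs)] with s hs
      exact resRem_eq_D0 r s hs hrne
    rw [h1.deriv_eq, (hasDerivAt_D0 r t ht hrne).deriv]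
  -- positivity of denominators
  have hl2 : (0:ℝ) < l^2 := pow_pos hl 2
  have hl3 : (0:ℝ) < l^3 := pow_pos hl 3
  have hl4 : (0:ℝ) < l^4 := pow_pos hl 4
  have hπ0 : (0:ℝ) < Real.pi := Real.pi_pos
  interval_cases j
  · -- j = 0
    rw [iteratedDeriv_zero]
    have he : resRem l r = D0 r l := resRem_eq_D0 r l hlne hrne
    show ‖resRem l r‖ ≤ _
    rw [he, D0, hcast]
    have hdeq : (8*(Real.pi:ℂ)*(l:ℂ)^2*(r:ℂ)) = ((8*Real.pi*l^2*r : ℝ):ℂ) := by push_cast; ring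
    rw [hdeq, norm_div, Complex.norm_real]
    have hdpos : (0:ℝ) < 8*Real.pi*l^2*r := by positivity
    rw [Real.norm_eq_abs, abs_of_pos hdpos, div_le_iff₀ hdpos]
    have : w^4 = l^4*r^4 := by rw [hwdef]; ring
    simp only [show (2-0:ℕ)=2 from rfl]
    nlinarith [mul_pos hl4 (pow_pos hr 4), norm_nonneg (Nf w)]
  · -- j = 1
    rw [iteratedDeriv_one, hev1.self_of_nhds, D1, hcast]
    have hdeq : (8*(Real.pi:ℂ)*(l:ℂ)^3*(r:ℂ)) = ((8*Real.pi*l^3*r : ℝ):ℂ) := by push_cast; ring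
    rw [hdeq, norm_div, Complex.norm_real]
    have hdpos : (0:ℝ) < 8*Real.pi*l^3*r := by positivity
    rw [Real.norm_eq_abs, abs_of_pos hdpos, div_le_iff₀ hdpos]
    have htri : ‖(w:ℂ) * Nf1 w - 2*Nf w‖ ≤ w * w^3 + 2*w^4 := by
      refine le_trans (norm_sub_le _ _) ?_
      rw [norm_mul, norm_mul, Complex.norm_real, Real.norm_eq_abs, _root_.abs_of_nonneg hw0]
      have h2 : ‖(2:ℂ)‖ = 2 := by norm_num
      rw [h2]
      have := mul_le_mul_of_nonneg_left hb1 hw0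
      have := mul_le_mul_of_nonneg_left hb0 (by norm_num : (0:ℝ) ≤ 2)
      linarith
    have hw4 : w^4 = l^4*r^4 := by rw [hwdef]; ring
    simp only [show (2-1:ℕ)=1 from rfl, pow_one]
    nlinarith [mul_pos hl4 (pow_pos hr 4)]
  · -- j = 2
    have h2eq : iteratedDeriv 2 (fun t : ℝ => resRem t r) l
        = deriv (deriv (fun t : ℝ => resRem t r)) l := by
      rw [iteratedDeriv_succ, iteratedDeriv_one]
    rw [h2eq, hev1.deriv_eq, (hasDerivAt_D1 r l hlne hrne).deriv, D2, hcast]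
    have hdeq : (8*(Real.pi:ℂ)*(l:ℂ)^4*(r:ℂ)) = ((8*Real.pi*l^4*r : ℝ):ℂ) := by push_cast; ring
    rw [hdeq, norm_div, Complex.norm_real]
    have hdpos : (0:ℝ) < 8*Real.pi*l^4*r := by positivity
    rw [Real.norm_eq_abs, abs_of_pos hdpos, div_le_iff₀ hdpos]
    have htri : ‖((w:ℂ))^2 * Nf2 w - 4*((w:ℂ))*Nf1 w + 6*Nf w‖
        ≤ w^2*(2*w^2) + 4*w*w^3 + 6*w^4 := by
      refine le_trans (norm_add_le _ _) ?_
      have htri2 : ‖((w:ℂ))^2 * Nf2 w - 4*((w:ℂ))*Nf1 w‖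
          ≤ w^2*(2*w^2) + 4*w*w^3 := by
        refine le_trans (norm_sub_le _ _) ?_
        rw [norm_mul, norm_mul, norm_mul, norm_pow, Complex.norm_real, Real.norm_eq_abs,
          _root_.abs_of_nonneg hw0]
        have h4 : ‖(4:ℂ)‖ = 4 := by norm_num
        rw [h4]
        have e1 := mul_le_mul_of_nonneg_left hb2 (pow_nonneg hw0 2)
        have e2 := mul_le_mul_of_nonneg_left hb1 hw0
        nlinarith
      have h6 : ‖6*Nf w‖ ≤ 6*w^4 := by
        rw [norm_mul]
        have h6' : ‖(6:ℂ)‖ = 6 := by norm_num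
        rw [h6']
        linarith [mul_le_mul_of_nonneg_left hb0 (by norm_num : (0:ℝ) ≤ 6)]
      linarith
    have hw4 : w^4 = l^4*r^4 := by rw [hwdef]; ring
    simp only [show (2-2:ℕ)=0 from rfl, pow_zero]
    nlinarith [mul_pos hl4 (pow_pos hr 4)]
end
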